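/- Let D ⊂ ℝ^d_{≥0} be nonempty convex compact. The function f(α) = max over y ∈ D of min over i ∈ [d] of y_i/α_i (with convention a/0 = +∞) is quasi-concave on ℝ^d_{≥0}: for all α, β ∈ ℝ^d_{≥0} and λ ∈ (0,1), f(λα + (1-λ)β) ≥ min{f(α), f(β)}. -/
import Mathlib


open scoped ENNReal NNReal

/-- Ratio with the convention `a / 0 = +∞`. -/
noncomputable def erat (a b : ℝ) : ℝ≥0∞ :=
  if b = 0 then ⊤ else ENNReal.ofReal (a / b)

lemma mul_le_of_lt_erat {a b : ℝ} {r : ℝ≥0} (ha : 0 ≤ a) (hb : 0 ≤ b)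
    (h : (r : ℝ≥0∞) < erat a b) : (r : ℝ) * b ≤ a := by
  unfold erat at h
  by_cases hb0 : b = 0
  · simpa [hb0] using ha
  · rw [if_neg hb0] at h
    have hbpos : 0 < b := lt_of_le_of_ne hb (Ne.symm hb0)
    have hr : (r : ℝ) < a / b := by
      have := (ENNReal.lt_ofReal_iff_toReal_lt (by simp)).mp h
      simpa using this
    have := (lt_div_iff₀ hbpos).mp hr
    linarith

lemma le_erat_of_mul_le {a b : ℝ} {r : ℝ≥0} (hb : 0 ≤ b)
    (h : (r : ℝ) * b ≤ a) : (r : ℝ≥0∞) ≤ erat a b := by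
  unfold erat
  by_cases hb0 : b = 0
  · simp [hb0]
  · rw [if_neg hb0]
    have hbpos : 0 < b := lt_of_le_of_ne hb (Ne.symm hb0)
    have hr : (r : ℝ) ≤ a / b := (le_div_iff₀ hbpos).mpr h
    calc (r : ℝ≥0∞) = ENNReal.ofReal (r : ℝ) := ENNReal.ofReal_coe_nnreal.symm
      _ ≤ ENNReal.ofReal (a / b) := ENNReal.ofReal_le_ofReal hr

/-- For a nonempty convex compact `D ⊆ ℝ^d_{≥0}`, the function
`f(α) = max_{y ∈ D} min_i y_i/α_i` (with `a/0 = +∞`) is quasi-concave on `ℝ^d_{≥0}`. -/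
theorem quasiconcave_max_min_ratio (d : ℕ) (D : Set (Fin d → ℝ))
    (hne : D.Nonempty) (hconv : Convex ℝ D) (hcomp : IsCompact D)
    (hDnn : ∀ y ∈ D, ∀ i, 0 ≤ y i)
    (α β : Fin d → ℝ) (hα : ∀ i, 0 ≤ α i) (hβ : ∀ i, 0 ≤ β i)
    (lam : ℝ) (hlam0 : 0 < lam) (hlam1 : lam < 1) :
    min (⨆ y ∈ D, ⨅ i, erat (y i) (α i)) (⨆ y ∈ D, ⨅ i, erat (y i) (β i))
      ≤ ⨆ y ∈ D, ⨅ i, erat (y i) ((lam • α + (1 - lam) • β) i) := by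
  apply ENNReal.le_of_forall_nnreal_lt
  intro r hr
  have hrα : (r : ℝ≥0∞) < ⨆ y ∈ D, ⨅ i, erat (y i) (α i) :=
    hr.trans_le (min_le_left _ _)
  have hrβ : (r : ℝ≥0∞) < ⨆ y ∈ D, ⨅ i, erat (y i) (β i) :=
    hr.trans_le (min_le_right _ _)
  rw [lt_iSup_iff] at hrα hrβ
  obtain ⟨y, hy⟩ := hrα
  obtain ⟨z, hz⟩ := hrβ
  rw [lt_iSup_iff] at hy hz
  obtain ⟨hyD, hy⟩ := hy
  obtain ⟨hzD, hz⟩ := hz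
  set w := lam • y + (1 - lam) • z with hw
  have hwD : w ∈ D := hconv hyD hzD hlam0.le (by linarith) (by ring)
  refine le_trans ?_ (le_iSup₂_of_le w hwD le_rfl)
  refine le_iInf fun i => ?_
  have hyi : (r : ℝ) * α i ≤ y i :=
    mul_le_of_lt_erat (hDnn y hyD i) (hα i) (hy.trans_le (iInf_le _ i))
  have hzi : (r : ℝ) * β i ≤ z i :=
    mul_le_of_lt_erat (hDnn z hzD i) (hβ i) (hz.trans_le (iInf_le _ i))
  have hc : 0 ≤ lam * α i + (1 - lam) * β i := by
    have := hα i; have := hβ i; nlinarith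
  apply le_erat_of_mul_le
  · simpa using hc
  · simp only [hw, Pi.add_apply, Pi.smul_apply, smul_eq_mul]
    nlinarith
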